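/- Under the coverage assumption Q(x) ∈ 𝒫(x) for all x (where 𝒫(x) is the Wasserstein ball of radius r_N centered at P̂(x)) and the Lipschitz assumption |h(x,s₁)−h(x,s₂)| ≤ c_p d(s₁,s₂), the DRO optimal value Ĵ_N = min_x max_{P∈𝒫(x)} 𝔼_P[h(x,ξ)] and the out-of-sample value J_N = 𝔼_{Q(x̂_N)}[h(x̂_N,ξ)] of a DRO-optimal solution x̂_N satisfy Ĵ_N − 2 c_p r_N ≤ J_N ≤ Ĵ_N. -/

import Mathlib

open MeasureTheory
open scoped ENNReal

/-- A coupling of two measures: a measure on the product whose marginals are `P` and `Q`. -/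
def IsCoupling {Ξ : Type*} [MeasurableSpace Ξ] (P Q : Measure Ξ) (γ : Measure (Ξ × Ξ)) : Prop :=
  γ.map Prod.fst = P ∧ γ.map Prod.snd = Q

/-- The L¹-Wasserstein distance: the infimum of the transport cost over all couplings. -/
noncomputable def wassersteinDist {Ξ : Type*} [MeasurableSpace Ξ] [PseudoMetricSpace Ξ]
    (P Q : Measure Ξ) : ℝ :=
  sInf {r : ℝ | ∃ γ : Measure (Ξ × Ξ), IsCoupling P Q γ ∧ ∫ p, dist p.1 p.2 ∂γ = r}

lemma kr_bound {Ξ : Type*} [MeasurableSpace Ξ] [MetricSpace Ξ] [CompactSpace Ξ] [BorelSpace Ξ]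
    (P P' : Measure Ξ) [IsProbabilityMeasure P] [IsProbabilityMeasure P']
    (f : Ξ → ℝ) (cp : ℝ) (hcp : 0 ≤ cp)
    (hf : ∀ s₁ s₂, |f s₁ - f s₂| ≤ cp * dist s₁ s₂) :
    |(∫ s, f s ∂P) - ∫ s, f s ∂P'| ≤ cp * wassersteinDist P P' := by
  have hfc : Continuous f :=
    (LipschitzWith.of_dist_le_mul (K := ⟨cp, hcp⟩) (f := f)
      (fun x y => by rw [Real.dist_eq]; exact hf x y)).continuous
  set S := {r : ℝ | ∃ γ : Measure (Ξ × Ξ), IsCoupling P P' γ ∧ ∫ p, dist p.1 p.2 ∂γ = r} with hS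
  have hSne : S.Nonempty := by
    refine ⟨∫ p, dist p.1 p.2 ∂(P.prod P'), P.prod P', ⟨?_, ?_⟩, rfl⟩
    · simp [Measure.map_fst_prod]
    · simp [Measure.map_snd_prod]
  have key : ∀ γ : Measure (Ξ × Ξ), IsCoupling P P' γ →
      |(∫ s, f s ∂P) - ∫ s, f s ∂P'| ≤ cp * ∫ p, dist p.1 p.2 ∂γ := by
    intro γ hγ
    haveI hγprob : IsProbabilityMeasure γ := by
      constructor
      have h0 : γ Set.univ = P Set.univ := by
        rw [← hγ.1, Measure.map_apply measurable_fst MeasurableSet.univ, Set.preimage_univ]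
      rw [h0, measure_univ]
    have hi1 : Integrable (fun p : Ξ × Ξ => f p.1) γ :=
      (hfc.comp continuous_fst).integrable_of_hasCompactSupport (IsCompact.of_isClosed_subset isCompact_univ (isClosed_tsupport _) (Set.subset_univ _))
    have hi2 : Integrable (fun p : Ξ × Ξ => f p.2) γ :=
      (hfc.comp continuous_snd).integrable_of_hasCompactSupport (IsCompact.of_isClosed_subset isCompact_univ (isClosed_tsupport _) (Set.subset_univ _))
    have h1 : ∫ s, f s ∂P = ∫ p, f p.1 ∂γ := by
      rw [← hγ.1, integral_map measurable_fst.aemeasurable hfc.aestronglyMeasurable]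
    have h2 : ∫ s, f s ∂P' = ∫ p, f p.2 ∂γ := by
      rw [← hγ.2, integral_map measurable_snd.aemeasurable hfc.aestronglyMeasurable]
    rw [h1, h2, ← integral_sub hi1 hi2]
    calc |∫ p, (f p.1 - f p.2) ∂γ| ≤ ∫ p, |f p.1 - f p.2| ∂γ := by
          simpa [Real.norm_eq_abs] using norm_integral_le_integral_norm (fun p : Ξ × Ξ => f p.1 - f p.2) (μ := γ)
      _ ≤ ∫ p, cp * dist p.1 p.2 ∂γ := by
          refine integral_mono (hi1.sub hi2).abs ?_ fun p => hf p.1 p.2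
          exact (continuous_const.mul ((continuous_fst.dist continuous_snd))).integrable_of_hasCompactSupport (IsCompact.of_isClosed_subset isCompact_univ (isClosed_tsupport _) (Set.subset_univ _))
      _ = cp * ∫ p, dist p.1 p.2 ∂γ := integral_const_mul _ _
  refine le_of_forall_pos_le_add fun ε hε => ?_
  obtain ⟨r, hrS, hrlt⟩ := Real.lt_sInf_add_pos hSne (show (0:ℝ) < ε / (cp + 1) by positivity)
  obtain ⟨γ, hγ, hγr⟩ := hrS
  calc |(∫ s, f s ∂P) - ∫ s, f s ∂P'| ≤ cp * ∫ p, dist p.1 p.2 ∂γ := key γ hγ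
    _ = cp * r := by rw [hγr]
    _ ≤ cp * (sInf S + ε / (cp + 1)) := by
        exact mul_le_mul_of_nonneg_left hrlt.le hcp
    _ = cp * sInf S + cp * (ε / (cp + 1)) := by ring
    _ ≤ cp * wassersteinDist P P' + ε := by
        have : cp * (ε / (cp + 1)) ≤ ε := by
          rw [mul_div_assoc'] at *
          rw [div_le_iff₀ (by positivity)]
          nlinarith
        simp only [wassersteinDist, ← hS]
        linarith

/-- With Wasserstein-ball ambiguity sets `𝒫(x)` of radius `r_N` around the
nominal distributions `P̂(x)`, under coverage `Q(x) ∈ 𝒫(x)` and uniform Lipschitz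
continuity of `h` in its second argument, the DRO value `Ĵ_N` and the out-of-sample value
`J_N = 𝔼_{Q(x̂_N)}[h(x̂_N,ξ)]` of a DRO-optimal solution satisfy
`Ĵ_N − 2 c_p r_N ≤ J_N ≤ Ĵ_N`. -/
theorem dro_out_of_sample_bounds
    {X Ξ : Type*} [Nonempty X] [MeasurableSpace Ξ] [MetricSpace Ξ] [CompactSpace Ξ] [BorelSpace Ξ]
    (Phat Q : X → Measure Ξ) (rN cp : ℝ) (hcp : 0 ≤ cp) (hrN : 0 ≤ rN)
    (hPhatProb : ∀ x, IsProbabilityMeasure (Phat x))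
    (hQProb : ∀ x, IsProbabilityMeasure (Q x))
    (Pamb : X → Set (Measure Ξ))
    (hPamb : ∀ x, Pamb x =
      {P : Measure Ξ | IsProbabilityMeasure P ∧ wassersteinDist P (Phat x) ≤ rN})
    (hcov : ∀ x, Q x ∈ Pamb x)
    (h : X → Ξ → ℝ)
    (hLip : ∀ x s₁ s₂, |h x s₁ - h x s₂| ≤ cp * dist s₁ s₂)
    (xhat : X)
    (hmin : sSup ((fun P => ∫ s, h xhat s ∂P) '' Pamb xhat) =
      ⨅ x, sSup ((fun P => ∫ s, h x s ∂P) '' Pamb x))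
    (hattain : ∃ QW ∈ Pamb xhat,
      (∫ s, h xhat s ∂QW) = sSup ((fun P => ∫ s, h xhat s ∂P) '' Pamb xhat)) :
    (⨅ x, sSup ((fun P => ∫ s, h x s ∂P) '' Pamb x)) - 2 * cp * rN ≤
        ∫ s, h xhat s ∂(Q xhat) ∧
      (∫ s, h xhat s ∂(Q xhat)) ≤ ⨅ x, sSup ((fun P => ∫ s, h x s ∂P) '' Pamb x) := by
  have hPhp := hPhatProb xhat
  obtain ⟨hQp, hQd⟩ : IsProbabilityMeasure (Q xhat) ∧
      wassersteinDist (Q xhat) (Phat xhat) ≤ rN := by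
    have := hcov xhat; rwa [hPamb xhat] at this
  -- any member of the ambiguity set has integral within cp*rN of the nominal integral
  have hmem : ∀ P ∈ Pamb xhat,
      |(∫ s, h xhat s ∂P) - ∫ s, h xhat s ∂(Phat xhat)| ≤ cp * rN := by
    intro P hP
    rw [hPamb xhat] at hP
    obtain ⟨hPp, hPd⟩ := hP
    calc |(∫ s, h xhat s ∂P) - ∫ s, h xhat s ∂(Phat xhat)|
        ≤ cp * wassersteinDist P (Phat xhat) := kr_bound P (Phat xhat) _ cp hcp (hLip xhat)
      _ ≤ cp * rN := mul_le_mul_of_nonneg_left hPd hcp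
  have hbdd : BddAbove ((fun P => ∫ s, h xhat s ∂P) '' Pamb xhat) := by
    refine ⟨(∫ s, h xhat s ∂(Phat xhat)) + cp * rN, ?_⟩
    rintro r ⟨P, hP, rfl⟩
    have := hmem P hP
    have := abs_le.1 this
    linarith [this.2]
  obtain ⟨QW, hQW, hQWval⟩ := hattain
  have hQWd : wassersteinDist QW (Phat xhat) ≤ rN ∧ IsProbabilityMeasure QW := by
    have := hQW; rw [hPamb xhat] at this; exact ⟨this.2, this.1⟩
  have hQWmem := hmem QW hQW
  have hQmem := hmem (Q xhat) (hcov xhat)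
  constructor
  · rw [← hmin, ← hQWval]
    have h1 := abs_le.1 hQWmem
    have h2 := abs_le.1 hQmem
    linarith [h1.1, h1.2, h2.1, h2.2]
  · rw [← hmin]
    exact le_csSup hbdd ⟨Q xhat, hcov xhat, rfl⟩
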